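/- Sensitivity of SGD on convex objectives: let E be a real inner product space, X a type of examples, and ℓ : E → X → ℝ a loss such that for every a ∈ X the map w ↦ ℓ(w, a) is differentiable, convex on all of E, Lipschitz with constant L, and β-smooth (its gradient is Lipschitz with constant β). Fix a step size η with 0 < η ≤ 2/β. Let x, x' : Fin N → X be two neighbouring datasets differing only at a single index i₀, let s : ℕ → Fin N be any traversal order (the sequence of sampled indices, determined by the common random seed), and define iterates w 0 = w' 0, w(t+1) = w(t) − η • ∇_w ℓ(w(t), x(s t)) and w'(t+1) = w'(t) − η • ∇_w ℓ(w'(t), x'(s t)). Then for every T, ‖w(T) − w'(T)‖ ≤ 2ηL · |{t < T : s t = i₀}|. In particular, for k full passes over the data, ‖w(T) − w'(T)‖ ≤ 2kLη. -/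

import Mathlib

open scoped NNReal RealInnerProductSpace


section SGDAux
variable {E : Type*} [NormedAddCommGroup E] [InnerProductSpace ℝ E] [CompleteSpace E]

lemma sgd_hasDerivAt_line {f : E → ℝ} (hf : Differentiable ℝ f) (u v : E) (t : ℝ) :
    HasDerivAt (fun t : ℝ => f (u + t • (v - u)))
      ⟪gradient f (u + t • (v - u)), v - u⟫ t := by
  have h1 : HasDerivAt (fun t : ℝ => u + t • (v - u)) (v - u) t := by
    simpa using ((hasDerivAt_id t).smul_const (v - u)).const_add u
  have h2 := ((hf (u + t • (v - u))).hasGradientAt.hasFDerivAt).comp_hasDerivAt t h1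
  simpa [InnerProductSpace.toDual_apply_apply, Function.comp_def] using h2

/-- Gradient inequality for convex functions. -/
lemma sgd_convex_grad_ineq {f : E → ℝ} (hf : Differentiable ℝ f)
    (hc : ConvexOn ℝ Set.univ f) (u v : E) :
    f u + ⟪gradient f u, v - u⟫ ≤ f v := by
  set g : ℝ → ℝ := fun t => f (u + t • (v - u)) with hgdef
  have hgc : ConvexOn ℝ Set.univ g := by
    have := hc.comp_affineMap (AffineMap.lineMap u v : ℝ →ᵃ[ℝ] E)
    have heq : (f ∘ (AffineMap.lineMap u v : ℝ →ᵃ[ℝ] E)) = g := by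
      funext t
      simp [g, AffineMap.lineMap_apply, vsub_eq_sub, vadd_eq_add, add_comm]
    rw [heq, Set.preimage_univ] at this
    exact this
  have hd : HasDerivAt g ⟪gradient f u, v - u⟫ 0 := by
    simpa using sgd_hasDerivAt_line hf u v 0
  have hs := hgc.le_slope_of_hasDerivAt (Set.mem_univ (0:ℝ)) (Set.mem_univ (1:ℝ))
    one_pos hd
  have : slope g 0 1 = f v - f u := by
    simp [slope_def_field, g]
  rw [this] at hs
  linarith

/-- Descent lemma for `b`-smooth functions. -/
lemma sgd_descent_lemma {f : E → ℝ} (hf : Differentiable ℝ f) {b : ℝ}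
    (hl : ∀ p q : E, ‖gradient f p - gradient f q‖ ≤ b * ‖p - q‖) (u v : E) :
    f v ≤ f u + ⟪gradient f u, v - u⟫ + b / 2 * ‖v - u‖ ^ 2 := by
  set c : ℝ := ⟪gradient f u, v - u⟫ with hc
  set h : ℝ → ℝ := fun t => f (u + t • (v - u)) - t * c - b / 2 * t ^ 2 * ‖v - u‖ ^ 2 with hh
  have hder : ∀ t : ℝ, HasDerivAt h
      (⟪gradient f (u + t • (v - u)), v - u⟫ - c - b * t * ‖v - u‖ ^ 2) t := by
    intro t
    have h1 := sgd_hasDerivAt_line hf u v t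
    have h2 : HasDerivAt (fun t : ℝ => t * c) c t := by
      simpa using (hasDerivAt_id t).mul_const c
    have h3 : HasDerivAt (fun t : ℝ => b / 2 * t ^ 2 * ‖v - u‖ ^ 2)
        (b * t * ‖v - u‖ ^ 2) t := by
      have := ((hasDerivAt_pow 2 t).const_mul (b / 2)).mul_const (‖v - u‖ ^ 2)
      exact this.congr_deriv (by rw [show (2:ℕ) - 1 = 1 from rfl]; push_cast; ring)
    exact (h1.sub h2).sub h3
  have hanti : AntitoneOn h (Set.Icc 0 1) := by
    apply antitoneOn_of_deriv_nonpos (convex_Icc 0 1)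
    · have : Differentiable ℝ h := fun t => (hder t).differentiableAt
      exact this.continuous.continuousOn
    · intro t _
      exact ((hder t).differentiableAt).differentiableWithinAt
    · intro t ht
      rw [interior_Icc] at ht
      rw [(hder t).deriv]
      have key : ⟪gradient f (u + t • (v - u)) - gradient f u, v - u⟫
          ≤ b * t * ‖v - u‖ ^ 2 := by
        calc ⟪gradient f (u + t • (v - u)) - gradient f u, v - u⟫
            ≤ ‖gradient f (u + t • (v - u)) - gradient f u‖ * ‖v - u‖ :=
              real_inner_le_norm _ _
          _ ≤ (b * ‖(u + t • (v - u)) - u‖) * ‖v - u‖ :=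
              mul_le_mul_of_nonneg_right (hl _ _) (norm_nonneg _)
          _ = b * t * ‖v - u‖ ^ 2 := by
              rw [add_sub_cancel_left, norm_smul, Real.norm_eq_abs, abs_of_pos ht.1]
              ring
      have hsplit : ⟪gradient f (u + t • (v - u)), v - u⟫ - c =
          ⟪gradient f (u + t • (v - u)) - gradient f u, v - u⟫ := by
        rw [inner_sub_left]
      linarith
  have h01 := hanti (Set.mem_Icc.2 ⟨le_refl 0, zero_le_one⟩)
    (Set.mem_Icc.2 ⟨zero_le_one, le_refl 1⟩) zero_le_one
  simp only [h, zero_smul, add_zero, zero_mul, mul_zero, sub_zero, one_smul,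
    one_mul, one_pow, mul_one, zero_pow] at h01
  have huv : u + (v - u) = v := by abel
  rw [huv] at h01
  linarith [h01]

lemma sgd_grad_of_sub_inner {f : E → ℝ} (hf : Differentiable ℝ f) (a : E) (z : E) :
    HasGradientAt (fun z : E => f z - ⟪a, z⟫) (gradient f z - a) z := by
  have h1 : HasFDerivAt f (InnerProductSpace.toDual ℝ E (gradient f z)) z :=
    (hf z).hasGradientAt.hasFDerivAt
  have h2 : HasFDerivAt (fun z : E => (⟪a, z⟫ : ℝ))
      (InnerProductSpace.toDual ℝ E a) z := by
    exact (InnerProductSpace.toDual ℝ E a).hasFDerivAt (x := z)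
  have h3 := h1.sub h2
  rw [← map_sub] at h3
  simpa [gradient, Pi.sub_def] using h3.hasGradientAt

lemma sgd_coco_half {f : E → ℝ} (hf : Differentiable ℝ f)
    (hc : ConvexOn ℝ Set.univ f) {b : ℝ} (hb : 0 < b)
    (hl : ∀ p q : E, ‖gradient f p - gradient f q‖ ≤ b * ‖p - q‖) (u v : E) :
    1 / (2 * b) * ‖gradient f v - gradient f u‖ ^ 2
      ≤ f v - f u - ⟪gradient f u, v - u⟫ := by
  set a : E := gradient f u with ha
  set g : E → ℝ := fun z => f z - ⟪a, z⟫ with hgdef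
  have hg : Differentiable ℝ g := fun z => (sgd_grad_of_sub_inner hf a z).differentiableAt
  have hggrad : gradient g = fun z => gradient f z - a :=
    gradient_eq (sgd_grad_of_sub_inner hf a)
  have hglip : ∀ p q : E, ‖gradient g p - gradient g q‖ ≤ b * ‖p - q‖ := by
    intro p q
    rw [hggrad]
    simpa [sub_sub_sub_cancel_right] using hl p q
  set Δ : E := gradient f v - a with hΔ
  set wst : E := v - b⁻¹ • Δ with hwst
  have hdesc := sgd_descent_lemma hg hglip v wst
  have e1 : wst - v = -(b⁻¹ • Δ) := by rw [hwst]; abel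
  have egv : gradient g v = Δ := by rw [hggrad]
  have e2 : ⟪gradient g v, wst - v⟫ = -(b⁻¹ * ‖Δ‖ ^ 2) := by
    rw [egv, e1, inner_neg_right, real_inner_smul_right,
      real_inner_self_eq_norm_sq]
  have e3 : ‖wst - v‖ ^ 2 = b⁻¹ ^ 2 * ‖Δ‖ ^ 2 := by
    rw [e1, norm_neg, norm_smul, Real.norm_eq_abs, abs_of_pos (by positivity : (0:ℝ) < b⁻¹),
      mul_pow]
  rw [e2, e3] at hdesc
  -- g wst ≤ g v - 1/(2b) ‖Δ‖²
  have hb' : b ≠ 0 := ne_of_gt hb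
  have hdesc' : g wst ≤ g v - 1 / (2 * b) * ‖Δ‖ ^ 2 := by
    have : -(b⁻¹ * ‖Δ‖ ^ 2) + b / 2 * (b⁻¹ ^ 2 * ‖Δ‖ ^ 2) = -(1 / (2 * b) * ‖Δ‖ ^ 2) := by
      field_simp
      ring
    linarith [hdesc, this]
  -- convexity : g u ≤ g wst
  have hconv := sgd_convex_grad_ineq hf hc u wst
  have e4 : ⟪a, wst - u⟫ = ⟪a, wst⟫ - ⟪a, u⟫ := inner_sub_right a wst u
  have hgu : g u ≤ g wst := by
    simp only [hgdef]
    rw [← ha] at hconv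
    linarith [hconv, e4]
  have e5 : ⟪a, v - u⟫ = ⟪a, v⟫ - ⟪a, u⟫ := inner_sub_right a v u
  have : g u ≤ g v - 1 / (2 * b) * ‖Δ‖ ^ 2 := le_trans hgu hdesc'
  simp only [hgdef] at this
  rw [ha] at e5 ⊢
  linarith [this, e5]

lemma sgd_coco {f : E → ℝ} (hf : Differentiable ℝ f)
    (hc : ConvexOn ℝ Set.univ f) {b : ℝ} (hb : 0 < b)
    (hl : ∀ p q : E, ‖gradient f p - gradient f q‖ ≤ b * ‖p - q‖) (u v : E) :
    1 / b * ‖gradient f u - gradient f v‖ ^ 2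
      ≤ ⟪u - v, gradient f u - gradient f v⟫ := by
  have h1 := sgd_coco_half hf hc hb hl u v
  have h2 := sgd_coco_half hf hc hb hl v u
  have e1 : ‖gradient f v - gradient f u‖ = ‖gradient f u - gradient f v‖ :=
    norm_sub_rev _ _
  rw [e1] at h1
  have e2 : ⟪gradient f u, v - u⟫ = ⟪gradient f u, v⟫ - ⟪gradient f u, u⟫ :=
    inner_sub_right _ _ _
  have e3 : ⟪gradient f v, u - v⟫ = ⟪gradient f v, u⟫ - ⟪gradient f v, v⟫ :=
    inner_sub_right _ _ _
  have e4 : ⟪u - v, gradient f u - gradient f v⟫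
      = (⟪gradient f u, u⟫ - ⟪gradient f u, v⟫) - (⟪gradient f v, u⟫ - ⟪gradient f v, v⟫) := by
    rw [inner_sub_right, inner_sub_left, inner_sub_left,
      real_inner_comm u (gradient f u), real_inner_comm v (gradient f u),
      real_inner_comm u (gradient f v), real_inner_comm v (gradient f v)]
  rw [e2] at h1; rw [e3] at h2; rw [e4]
  have : 1 / b = 1 / (2 * b) + 1 / (2 * b) := by field_simp; ring
  rw [this]
  linarith [h1, h2]

/-- A gradient step with a convex `b`-smooth function is nonexpansive for `η ≤ 2/b`. -/
lemma sgd_step_nonexpansive {f : E → ℝ} (hf : Differentiable ℝ f)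
    (hc : ConvexOn ℝ Set.univ f) {b : ℝ} (hb : 0 < b)
    (hl : ∀ p q : E, ‖gradient f p - gradient f q‖ ≤ b * ‖p - q‖)
    {η : ℝ} (hη0 : 0 ≤ η) (hη : η ≤ 2 / b) (u v : E) :
    ‖(u - η • gradient f u) - (v - η • gradient f v)‖ ≤ ‖u - v‖ := by
  set d : E := u - v with hd
  set Δ : E := gradient f u - gradient f v with hΔ
  have hrw : (u - η • gradient f u) - (v - η • gradient f v) = d - η • Δ := by
    rw [hd, hΔ, smul_sub]; abel
  rw [hrw]
  have hsq : ‖d - η • Δ‖ ^ 2 ≤ ‖d‖ ^ 2 := by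
    rw [norm_sub_sq_real]
    have e1 : ⟪d, η • Δ⟫ = η * ⟪d, Δ⟫ := real_inner_smul_right _ _ _
    have e2 : ‖η • Δ‖ ^ 2 = η ^ 2 * ‖Δ‖ ^ 2 := by
      rw [norm_smul, Real.norm_eq_abs, mul_pow, sq_abs]
    rw [e1, e2]
    have hco := sgd_coco hf hc hb hl u v
    rw [← hd, ← hΔ] at hco
    have hnn : (0:ℝ) ≤ ‖Δ‖ ^ 2 := by positivity
    have k1 : η * (1 / b * ‖Δ‖ ^ 2) ≤ η * ⟪d, Δ⟫ :=
      mul_le_mul_of_nonneg_left hco hη0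
    have k2 : η * (η * ‖Δ‖ ^ 2) ≤ 2 / b * (η * ‖Δ‖ ^ 2) :=
      mul_le_mul_of_nonneg_right hη (mul_nonneg hη0 hnn)
    have k3 : 2 / b * (η * ‖Δ‖ ^ 2) = 2 * (η * (1 / b * ‖Δ‖ ^ 2)) := by ring
    have key : η ^ 2 * ‖Δ‖ ^ 2 ≤ 2 * (η * ⟪d, Δ⟫) := by
      calc η ^ 2 * ‖Δ‖ ^ 2 = η * (η * ‖Δ‖ ^ 2) := by ring
        _ ≤ 2 / b * (η * ‖Δ‖ ^ 2) := k2
        _ = 2 * (η * (1 / b * ‖Δ‖ ^ 2)) := k3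
        _ ≤ 2 * (η * ⟪d, Δ⟫) := by linarith [k1]
    linarith [key]
  have hsqrt := Real.sqrt_le_sqrt hsq
  rwa [Real.sqrt_sq (norm_nonneg _), Real.sqrt_sq (norm_nonneg _)] at hsqrt

lemma sgd_grad_norm_le {f : E → ℝ} {L : ℝ≥0} (hL : LipschitzWith L f) (z : E) :
    ‖gradient f z‖ ≤ (L : ℝ) := by
  have h : ‖gradient f z‖ = ‖fderiv ℝ f z‖ :=
    (InnerProductSpace.toDual ℝ E).symm.norm_map (fderiv ℝ f z)
  rw [h]
  exact norm_fderiv_le_of_lipschitz ℝ hL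

end SGDAux

/-- **Sensitivity of SGD on convex objectives.** Let `ℓ w a` be a loss that is
differentiable, convex, `L`-Lipschitz, and `β`-smooth in the weights `w` for
every example `a`, and let `0 < η ≤ 2/β`. For two neighbouring datasets
differing only at the index `i₀` and a common traversal order `s`, the SGD
iterates from a common initialisation satisfy
`‖w T − w' T‖ ≤ 2ηL · |{t < T : s t = i₀}|`; in particular, for `k` full
passes over the data this gives the bound `2kLη`. -/
theorem sgd_convex_sensitivity
    {E : Type*} [NormedAddCommGroup E] [InnerProductSpace ℝ E] [CompleteSpace E]
    {X : Type*} (ℓ : E → X → ℝ) (L β : ℝ≥0) (hβ : 0 < β)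
    (hdiff : ∀ a : X, Differentiable ℝ (fun w => ℓ w a))
    (hconv : ∀ a : X, ConvexOn ℝ Set.univ (fun w => ℓ w a))
    (hlip : ∀ a : X, LipschitzWith L (fun w => ℓ w a))
    (hsmooth : ∀ a : X, LipschitzWith β (gradient (fun w => ℓ w a)))
    (η : ℝ) (hη0 : 0 < η) (hη : η ≤ 2 / (β : ℝ))
    (N : ℕ) (x x' : Fin N → X) (i₀ : Fin N)
    (hneighbour : ∀ i, i ≠ i₀ → x i = x' i)
    (s : ℕ → Fin N)
    (w w' : ℕ → E) (h0 : w 0 = w' 0)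
    (hw : ∀ t, w (t + 1) = w t - η • gradient (fun u => ℓ u (x (s t))) (w t))
    (hw' : ∀ t, w' (t + 1) = w' t - η • gradient (fun u => ℓ u (x' (s t))) (w' t)) :
    ∀ T : ℕ, ‖w T - w' T‖ ≤
      2 * η * (L : ℝ) * ((Finset.range T).filter fun t => s t = i₀).card := by
  have hb : (0 : ℝ) < (β : ℝ) := by exact_mod_cast hβ
  have hsm : ∀ a : X, ∀ p q : E,
      ‖gradient (fun u => ℓ u a) p - gradient (fun u => ℓ u a) q‖ ≤ (β : ℝ) * ‖p - q‖ := by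
    intro a p q
    have := (hsmooth a).dist_le_mul p q
    rwa [dist_eq_norm, dist_eq_norm] at this
  intro T
  induction T with
  | zero => simp [h0]
  | succ T ih =>
    have hLnn : (0 : ℝ) ≤ (L : ℝ) := (L : ℝ≥0).coe_nonneg
    by_cases hcase : s T = i₀
    · -- differing example: one extra 2ηL
      set f : E → ℝ := fun u => ℓ u (x (s T)) with hf
      set g : E → ℝ := fun u => ℓ u (x' (s T)) with hg
      have hsplit : w (T + 1) - w' (T + 1)
          = ((w T - η • gradient f (w T)) - (w' T - η • gradient f (w' T)))
            + η • (gradient g (w' T) - gradient f (w' T)) := by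
        rw [hw T, hw' T, smul_sub, ← hf, ← hg]
        abel
      have hne : ‖(w T - η • gradient f (w T)) - (w' T - η • gradient f (w' T))‖
          ≤ ‖w T - w' T‖ :=
        sgd_step_nonexpansive (hdiff _) (hconv _) hb (hsm _) hη0.le hη _ _
      have hgrads : ‖η • (gradient g (w' T) - gradient f (w' T))‖ ≤ η * (2 * (L : ℝ)) := by
        rw [norm_smul, Real.norm_eq_abs, abs_of_pos hη0]
        refine mul_le_mul_of_nonneg_left ?_ hη0.le
        calc ‖gradient g (w' T) - gradient f (w' T)‖
            ≤ ‖gradient g (w' T)‖ + ‖gradient f (w' T)‖ := norm_sub_le _ _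
          _ ≤ (L : ℝ) + (L : ℝ) := add_le_add
              (sgd_grad_norm_le (hlip _) _) (sgd_grad_norm_le (hlip _) _)
          _ = 2 * (L : ℝ) := by ring
      have hstep : ‖w (T + 1) - w' (T + 1)‖ ≤ ‖w T - w' T‖ + 2 * η * (L : ℝ) := by
        rw [hsplit]
        calc ‖_ + η • (gradient g (w' T) - gradient f (w' T))‖
            ≤ ‖(w T - η • gradient f (w T)) - (w' T - η • gradient f (w' T))‖
              + ‖η • (gradient g (w' T) - gradient f (w' T))‖ := norm_add_le _ _
          _ ≤ ‖w T - w' T‖ + 2 * η * (L : ℝ) := by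
              have : η * (2 * (L : ℝ)) = 2 * η * (L : ℝ) := by ring
              rw [← this]
              exact add_le_add hne hgrads
      have hcard : (((Finset.range (T + 1)).filter fun t => s t = i₀).card : ℝ)
          = (((Finset.range T).filter fun t => s t = i₀).card : ℝ) + 1 := by
        rw [Finset.range_add_one, Finset.filter_insert, if_pos hcase,
          Finset.card_insert_of_notMem (by simp)]
        push_cast
        ring
      rw [hcard]
      calc ‖w (T + 1) - w' (T + 1)‖ ≤ ‖w T - w' T‖ + 2 * η * (L : ℝ) := hstep
        _ ≤ 2 * η * (L : ℝ) * (((Finset.range T).filter fun t => s t = i₀).card : ℝ)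
            + 2 * η * (L : ℝ) := add_le_add_left ih _
        _ = 2 * η * (L : ℝ)
            * ((((Finset.range T).filter fun t => s t = i₀).card : ℝ) + 1) := by ring
    · -- same example: nonexpansive
      have hx : x (s T) = x' (s T) := hneighbour _ hcase
      have hstep : ‖w (T + 1) - w' (T + 1)‖ ≤ ‖w T - w' T‖ := by
        rw [hw T, hw' T, ← hx]
        exact sgd_step_nonexpansive (hdiff _) (hconv _) hb (hsm _) hη0.le hη _ _
      have hcard : ((Finset.range (T + 1)).filter fun t => s t = i₀)
          = ((Finset.range T).filter fun t => s t = i₀) := by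
        rw [Finset.range_add_one, Finset.filter_insert, if_neg hcase]
      rw [hcard]
      exact le_trans hstep ih
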